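/- Let s, u ∈ ℂ with s ≠ 0, let A = [[s, 1], [0, s⁻¹]], B = [[s, 0], [−u, s⁻¹]] in SL₂(ℂ), W = B·A⁻¹·B⁻¹·A, x = s + s⁻¹, and z = 2 + (2 − s² − s⁻²)u + u². For a natural number n ≥ 1, set Δ = ∑_{i=0}^{n−1} W^{−i} and Ω = A⁻¹·(I − B)·(I − A)·Δ. Then (z − 2)·det Ω = (2 − x)²·(S_n(z) − S_{n−2}(z) − 2); equivalently det Ω = (2 − x)²·(P_{n−1}(z) + P_{n−2}(z)). -/

import Mathlib

open Matrix

theorem aux_CH_det_Omega (M : Matrix (Fin 2) (Fin 2) ℂ) (t : ℂ)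
    (htr : M 0 0 + M 1 1 = t) (hdet : M.det = 1) : M * M = t • M - 1 := by
  rw [Matrix.det_fin_two] at hdet
  ext i j
  fin_cases i <;> fin_cases j <;>
    simp [Matrix.mul_apply, Fin.sum_univ_succ, Matrix.one_apply]
  · linear_combination M 0 0 * htr - hdet
  · linear_combination M 0 1 * htr
  · linear_combination M 1 0 * htr
  · linear_combination M 1 1 * htr - hdet

theorem aux_det_smul_det_Omega (M : Matrix (Fin 2) (Fin 2) ℂ) (t a b : ℂ)
    (htr : M 0 0 + M 1 1 = t) (hdet : M.det = 1) :
    (a • M + b • 1).det = a ^ 2 + a * b * t + b ^ 2 := by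
  rw [Matrix.det_fin_two] at hdet ⊢
  simp [Matrix.one_apply]
  linear_combination (a^2) * hdet + (a*b) * htr

/-- Let `s, u ∈ ℂ` with `s ≠ 0`, let `A = !![s, 1; 0, s⁻¹]`, `B = !![s, 0; -u, s⁻¹]`,
`W = B * A⁻¹ * B⁻¹ * A`, `x = s + s⁻¹`, `z = 2 + (2 - s² - s⁻²)u + u²`. For a natural
number `n ≥ 1`, set `Δ = ∑_{i=0}^{n-1} W^(-i)` and `Ω = A⁻¹ * (1 - B) * (1 - A) * Δ`.
Then `(z - 2) * det Ω = (2 - x)² * (S n - S (n-2) - 2)`; equivalently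
`det Ω = (2 - x)² * (P (n-1) + P (n-2))`, where `S` denotes the Chebyshev polynomials of
the second kind evaluated at `z` and `P k = ∑_{i=0}^{k} S i` with `P (-1) = 0`. -/
theorem det_Omega_twist_knot (s u x z : ℂ) (hs : s ≠ 0)
    (hx : x = s + s⁻¹) (hz : z = 2 + (2 - s ^ 2 - s⁻¹ ^ 2) * u + u ^ 2)
    (S : ℤ → ℂ) (hS0 : S 0 = 1) (hS1 : S 1 = z)
    (hSrec : ∀ k : ℤ, S k = z * S (k - 1) - S (k - 2))
    (P : ℤ → ℂ) (hPneg : P (-1) = 0)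
    (hP : ∀ k : ℕ, P (k : ℤ) = ∑ i ∈ Finset.range (k + 1), S (i : ℤ))
    (A B W : Matrix (Fin 2) (Fin 2) ℂ)
    (hA : A = !![s, 1; 0, s⁻¹]) (hB : B = !![s, 0; -u, s⁻¹])
    (hW : W = B * A⁻¹ * B⁻¹ * A)
    (n : ℕ) (hn : 1 ≤ n)
    (Δ Ω : Matrix (Fin 2) (Fin 2) ℂ)
    (hΔ : Δ = ∑ i ∈ Finset.range n, W ^ (-(i : ℤ)))
    (hΩ : Ω = A⁻¹ * (1 - B) * (1 - A) * Δ) :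
    (z - 2) * Ω.det = (2 - x) ^ 2 * (S (n : ℤ) - S ((n : ℤ) - 2) - 2) ∧
    Ω.det = (2 - x) ^ 2 * (P ((n : ℤ) - 1) + P ((n : ℤ) - 2)) := by
  -- ### Part 1: values of S at negative indices
  have hSm1 : S (-1) = 0 := by
    have h := hSrec 1; norm_num [hS0, hS1] at h; linear_combination h
  have hSm2 : S (-2) = -1 := by
    have h := hSrec 0; norm_num [hSm1, hS0] at h; linear_combination h
  -- ### Part 2: explicit inverses and the matrix V = W⁻¹
  set Ai : Matrix (Fin 2) (Fin 2) ℂ := !![s⁻¹, -1; 0, s] with hAi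
  set Bi : Matrix (Fin 2) (Fin 2) ℂ := !![s⁻¹, 0; u, s] with hBi
  have hAAi : A * Ai = 1 := by
    rw [hA, hAi, Matrix.mul_fin_two, Matrix.one_fin_two]
    congr 1 <;> field_simp <;> simp
  have hAiA : Ai * A = 1 := by
    rw [hA, hAi, Matrix.mul_fin_two, Matrix.one_fin_two]
    congr 1 <;> field_simp <;> simp
  have hBBi : B * Bi = 1 := by
    rw [hB, hBi, Matrix.mul_fin_two, Matrix.one_fin_two]
    congr 1 <;> field_simp <;> ring
  have hBiB : Bi * B = 1 := by
    rw [hB, hBi, Matrix.mul_fin_two, Matrix.one_fin_two]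
    congr 1 <;> field_simp <;> ring
  have hAinv : A⁻¹ = Ai := Matrix.inv_eq_right_inv hAAi
  have hBinv : B⁻¹ = Bi := Matrix.inv_eq_right_inv hBBi
  set V : Matrix (Fin 2) (Fin 2) ℂ := Ai * B * A * Bi with hVdef
  have cA : ∀ X : Matrix (Fin 2) (Fin 2) ℂ, A * (Ai * X) = X := fun X => by
    rw [← Matrix.mul_assoc, hAAi, Matrix.one_mul]
  have cAi : ∀ X : Matrix (Fin 2) (Fin 2) ℂ, Ai * (A * X) = X := fun X => by
    rw [← Matrix.mul_assoc, hAiA, Matrix.one_mul]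
  have cB : ∀ X : Matrix (Fin 2) (Fin 2) ℂ, B * (Bi * X) = X := fun X => by
    rw [← Matrix.mul_assoc, hBBi, Matrix.one_mul]
  have cBi : ∀ X : Matrix (Fin 2) (Fin 2) ℂ, Bi * (B * X) = X := fun X => by
    rw [← Matrix.mul_assoc, hBiB, Matrix.one_mul]
  have hWV : W * V = 1 := by
    rw [hW, hAinv, hBinv, hVdef]
    simp only [Matrix.mul_assoc, cA, cAi, cB, cBi]
    exact hBBi
  have hVW : V * W = 1 := by
    rw [hW, hAinv, hBinv, hVdef]
    simp only [Matrix.mul_assoc, cA, cAi, cB, cBi]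
    exact hAiA
  have hV : V = !![1 + 2*u + u^2 - u/s^2, s + s*u - 1/s;
                   -(s*u) + u/s - s*u^2, 1 - s^2*u] := by
    rw [hVdef, hA, hB, hAi, hBi, Matrix.mul_fin_two, Matrix.mul_fin_two, Matrix.mul_fin_two]
    ext i j
    fin_cases i <;> fin_cases j <;> simp <;> field_simp <;> ring
  have htrV : V 0 0 + V 1 1 = z := by
    rw [hV, hz]; simp; field_simp; ring
  have hdetV : V.det = 1 := by
    rw [hV, Matrix.det_fin_two_of]; field_simp; ring
  have hCH : V * V = z • V - 1 := aux_CH_det_Omega V z htrV hdetV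
  -- ### Part 3: powers
  have hcomm : Commute W V := by unfold Commute SemiconjBy; rw [hWV, hVW]
  have hWpow : ∀ i : ℕ, W ^ (-(i : ℤ)) = V ^ i := by
    intro i
    rw [Matrix.zpow_neg_natCast]
    refine Matrix.inv_eq_right_inv ?_
    rw [← hcomm.mul_pow, hWV, one_pow]
  have hVpow : ∀ i : ℕ, V ^ i = S ((i : ℤ) - 1) • V + (-(S ((i : ℤ) - 2))) • 1 := by
    intro i
    induction i with
    | zero => norm_num [hSm1, hSm2]
    | succ i ih =>
      rw [pow_succ, ih, Matrix.add_mul, Matrix.smul_mul, Matrix.smul_mul, hCH,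
        Matrix.one_mul]
      push_cast
      rw [show ((i : ℤ) + 1 - 1) = (i : ℤ) by ring, show ((i : ℤ) + 1 - 2) = (i : ℤ) - 1 by ring,
        hSrec (i : ℤ)]
      module
  -- ### Part 4: the scalar sequences
  set a : ℕ → ℂ := fun k => ∑ i ∈ Finset.range k, S ((i : ℤ) - 1) with ha
  set b : ℕ → ℂ := fun k => ∑ i ∈ Finset.range k, -(S ((i : ℤ) - 2)) with hb
  have ha0 : a 0 = 0 := by simp [ha]
  have hstep : ∀ k : ℕ, a (k + 1) = a k + S ((k : ℤ) - 1) := by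
    intro k; simp [ha, Finset.sum_range_succ]
  have ha1 : a 1 = 0 := by rw [hstep, ha0]; norm_num [hSm1]
  have ha2 : a 2 = 1 := by
    rw [show (2:ℕ) = 1 + 1 from rfl, hstep, ha1]; norm_num [hS0]
  have hasum : ∀ m : ℕ, a (m + 1) = ∑ i ∈ Finset.range m, S (i : ℤ) := by
    intro m
    simp only [ha, Finset.sum_range_succ']
    push_cast
    rw [Finset.sum_congr rfl (fun (i : ℕ) _ => show S ((i:ℤ) + 1 - 1) = S (i:ℤ) by norm_num)]
    norm_num [hSm1]
  have hPa : ∀ k : ℕ, P (k : ℤ) = a (k + 2) := by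
    intro k; rw [hP k, hasum (k + 1)]
  have hbval : ∀ m : ℕ, b (m + 1) = 1 - a m := by
    intro m
    simp only [ha, hb, Finset.sum_range_succ']
    push_cast
    rw [Finset.sum_congr rfl
      (fun (i : ℕ) _ => show -S ((i:ℤ) + 1 - 2) = -S ((i:ℤ) - 1) by
        rw [show (i:ℤ) + 1 - 2 = (i:ℤ) - 1 by ring])]
    rw [Finset.sum_neg_distrib]
    norm_num [hSm2]
    ring
  -- index-normalized step equations
  have e1' : ∀ m : ℕ, a (m + 3) = a (m + 2) + S ((m:ℤ) + 1) := by
    intro m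
    have h := hstep (m + 2)
    rw [show ((↑(m+2):ℤ)) - 1 = (m:ℤ) + 1 by push_cast; ring] at h
    rw [show m + 3 = m + 2 + 1 by ring]
    exact h
  have e2' : ∀ m : ℕ, a (m + 2) = a (m + 1) + S ((m:ℤ)) := by
    intro m
    have h := hstep (m + 1)
    rw [show ((↑(m+1):ℤ)) - 1 = (m:ℤ) by push_cast; ring] at h
    rw [show m + 2 = m + 1 + 1 by ring]
    exact h
  have e3' : ∀ m : ℕ, a (m + 1) = a m + S ((m:ℤ) - 1) := hstep
  have hr1 : ∀ m : ℕ, S ((m:ℤ) + 1) = z * S ((m:ℤ)) - S ((m:ℤ) - 1) := by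
    intro m
    have h := hSrec ((m:ℤ) + 1)
    rw [show ((m:ℤ) + 1 - 1) = (m:ℤ) by ring, show ((m:ℤ) + 1 - 2) = (m:ℤ) - 1 by ring] at h
    exact h
  have hr2 : ∀ m : ℕ, S ((m:ℤ) + 2) = z * S ((m:ℤ) + 1) - S ((m:ℤ)) := by
    intro m
    have h := hSrec ((m:ℤ) + 2)
    rw [show ((m:ℤ) + 2 - 1) = (m:ℤ) + 1 by ring, show ((m:ℤ) + 2 - 2) = (m:ℤ) by ring] at h
    exact h
  have hRa : ∀ m : ℕ, a (m + 2) = z * a (m + 1) - a m + 1 := by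
    intro m
    induction m with
    | zero => rw [ha2, ha1, ha0]; ring
    | succ m ih =>
      simp only [show m + 1 + 2 = m + 3 by ring, show m + 1 + 1 = m + 2 by ring]
      linear_combination e1' m - z * e2' m + ih + hr1 m + e3' m
  have hC : ∀ m : ℕ, a (m+1)^2 + a m ^2 - z * a (m+1) * a m = a (m+1) + a m := by
    intro m
    induction m with
    | zero => rw [ha1, ha0]; ring
    | succ m ih =>
      simp only [show m + 1 + 1 = m + 2 by ring]
      linear_combination ih + (a (m+2) - a m) * hRa m
  have hK : ∀ m : ℕ, a (m+1)^2 + a (m+1) * (1 - a m) * z + (1 - a m)^2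
      = a (m+2) + a (m+1) := by
    intro m
    linear_combination hC m - hRa m
  have hT : ∀ m : ℕ, (z - 2) * (a (m+2) + a (m+1))
      = S ((m : ℤ) + 1) - S ((m : ℤ) - 1) - 2 := by
    intro m
    induction m with
    | zero => rw [ha2, ha1]; norm_num [hS1, hSm1]
    | succ m ih =>
      simp only [show m + 1 + 2 = m + 3 by ring, show m + 1 + 1 = m + 2 by ring]
      rw [show ((↑(m+1):ℤ)) + 1 = (m:ℤ) + 2 by push_cast; ring,
        show ((↑(m+1):ℤ)) - 1 = (m:ℤ) by push_cast; ring]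
      linear_combination ih + (z-2) * e1' m + (z-2) * e2' m - hr2 m - hr1 m
  -- ### Part 5: the determinant of Δ
  have hΔ2 : Δ = a n • V + b n • 1 := by
    rw [hΔ, Finset.sum_congr rfl (fun (i : ℕ) _ => (hWpow i).trans (hVpow i)),
      Finset.sum_add_distrib, ← Finset.sum_smul, ← Finset.sum_smul]
  have hdetΔ : Δ.det = a n ^ 2 + a n * b n * z + b n ^ 2 := by
    rw [hΔ2]
    exact aux_det_smul_det_Omega V z (a n) (b n) htrV hdetV
  -- ### Part 6: the determinant of Ω
  have hdet1B : ((1 : Matrix (Fin 2) (Fin 2) ℂ) - B).det = 2 - x := by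
    have h1B : (1 : Matrix (Fin 2) (Fin 2) ℂ) - B = !![1-s, 0; u, 1-s⁻¹] := by
      rw [hB, Matrix.one_fin_two]
      ext i j
      fin_cases i <;> fin_cases j <;> simp
    rw [h1B, Matrix.det_fin_two_of, hx]
    field_simp
    ring
  have hdet1A : ((1 : Matrix (Fin 2) (Fin 2) ℂ) - A).det = 2 - x := by
    have h1A : (1 : Matrix (Fin 2) (Fin 2) ℂ) - A = !![1-s, -1; 0, 1-s⁻¹] := by
      rw [hA, Matrix.one_fin_two]
      ext i j
      fin_cases i <;> fin_cases j <;> simp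
    rw [h1A, Matrix.det_fin_two_of, hx]
    field_simp
    ring
  have hdetAi : (A⁻¹).det = 1 := by
    rw [hAinv, hAi, Matrix.det_fin_two_of]
    field_simp
    simp
  have hdetΩ : Ω.det = (2 - x) ^ 2 * Δ.det := by
    rw [hΩ, Matrix.det_mul, Matrix.det_mul, Matrix.det_mul, hdetAi, hdet1B, hdet1A]
    ring
  -- ### Part 7: conclusion
  obtain ⟨m, rfl⟩ : ∃ m, n = m + 1 := ⟨n - 1, (Nat.succ_pred_eq_of_pos hn).symm⟩
  have hdetΩ2 : Ω.det = (2 - x) ^ 2 * (a (m + 2) + a (m + 1)) := by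
    rw [hdetΩ, hdetΔ, hbval m]
    linear_combination (2 - x) ^ 2 * hK m
  have hP1 : P ((↑(m+1) : ℤ) - 1) = a (m + 2) := by
    rw [show ((↑(m+1) : ℤ) - 1) = (m : ℤ) by push_cast; ring, hPa m]
  have hP2 : P ((↑(m+1) : ℤ) - 2) = a (m + 1) := by
    cases m with
    | zero => norm_num [hPneg, ha1]
    | succ l =>
      rw [show ((↑(l+1+1) : ℤ) - 2) = (l : ℤ) by push_cast; ring, hPa l]
  constructor
  · rw [show ((↑(m+1) : ℤ)) = (m : ℤ) + 1 by push_cast; ring,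
      show ((m : ℤ) + 1 - 2) = (m : ℤ) - 1 by ring]
    linear_combination (z - 2) * hdetΩ2 + (2 - x) ^ 2 * hT m
  · rw [hP1, hP2, hdetΩ2]
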